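/- For every ℓ ≥ 1 there exists a function f : (Fin ℓ → ℝ) → (Fin (ℓ+1) → ℝ) that is continuous at every x ≠ 0 and satisfies: if x ≠ 0 and the last coordinate x(ℓ) ≤ 1, then f(x) = (x/‖x‖₁, 1), the ℓ1-normalization of x with the entry 1 appended; and if x ≠ 0 and x(ℓ) ≥ 2, then f(x) = (0, x/‖x‖₁), the ℓ1-normalization of x with the entry 0 prepended. Here ‖x‖₁ = ∑_t |x t|. -/
import Mathlib


open Finset

/-- The 'input MLP' construction used for the MSD/LSD transformer: nonzero rows with
last coordinate at most 1 get ℓ1-normalized with a constant 1 appended, while nonzero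
rows with last coordinate at least 2 get ℓ1-normalized with a 0 prepended; the map is
continuous at every nonzero point. -/
theorem stmt14 (ℓ : ℕ) (hℓ : 1 ≤ ℓ) :
    ∃ f : (Fin ℓ → ℝ) → (Fin (ℓ + 1) → ℝ),
      (∀ x : Fin ℓ → ℝ, x ≠ 0 → ContinuousAt f x) ∧
      (∀ x : Fin ℓ → ℝ, x ≠ 0 → x ⟨ℓ - 1, by omega⟩ ≤ 1 →
        f x = Fin.snoc (fun s => x s / ∑ s', |x s'|) 1) ∧
      (∀ x : Fin ℓ → ℝ, x ≠ 0 → 2 ≤ x ⟨ℓ - 1, by omega⟩ →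
        f x = Fin.cons 0 (fun s => x s / ∑ s', |x s'|)) := by
  set g : ℝ → ℝ := fun a => max 0 (min 1 (a - 1)) with hg
  have hgcont : Continuous g := by
    apply Continuous.max continuous_const
    exact Continuous.min continuous_const (by continuity)
  set L : Fin ℓ := ⟨ℓ - 1, by omega⟩ with hL
  refine ⟨fun x i => (1 - g (x L)) * (Fin.snoc (fun s => x s / ∑ s', |x s'|) 1 : Fin (ℓ + 1) → ℝ) i
      + g (x L) * (Fin.cons 0 (fun s => x s / ∑ s', |x s'|) : Fin (ℓ + 1) → ℝ) i, ?_, ?_, ?_⟩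
  · intro x hx
    have hsum : (∑ s', |x s'|) ≠ 0 := by
      intro h
      apply hx
      funext s
      have h0 : ∀ s' ∈ Finset.univ, |x s'| = 0 := by
        intro s' _
        have := (Finset.sum_eq_zero_iff_of_nonneg (fun s' _ => abs_nonneg (x s'))).1 h
        exact this s' (Finset.mem_univ s')
      simpa using abs_eq_zero.1 (h0 s (Finset.mem_univ s))
    have hncont : ∀ s : Fin ℓ, ContinuousAt (fun y : Fin ℓ → ℝ => y s / ∑ s', |y s'|) x := by
      intro s
      apply ContinuousAt.div (continuous_apply s).continuousAt
      · exact (continuous_finset_sum _ fun s' _ => (continuous_apply s').abs).continuousAt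
      · exact hsum
    have hgc : ContinuousAt (fun y : Fin ℓ → ℝ => g (y L)) x :=
      hgcont.continuousAt.comp (continuous_apply L).continuousAt
    apply continuousAt_pi.2
    intro i
    apply ContinuousAt.add
    · apply ContinuousAt.mul (ContinuousAt.sub continuousAt_const hgc)
      by_cases h : (i : ℕ) < ℓ
      · have : (fun y : Fin ℓ → ℝ => (Fin.snoc (fun s => y s / ∑ s', |y s'|) 1 : Fin (ℓ + 1) → ℝ) i)
            = fun y : Fin ℓ → ℝ => y (i.castLT h) / ∑ s', |y s'| := by
          funext y; simp [Fin.snoc, h]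
        rw [this]; exact hncont _
      · have : (fun y : Fin ℓ → ℝ => (Fin.snoc (fun s => y s / ∑ s', |y s'|) 1 : Fin (ℓ + 1) → ℝ) i)
            = fun _ => (1 : ℝ) := by
          funext y; simp [Fin.snoc, h]
        rw [this]; exact continuousAt_const
    · apply ContinuousAt.mul hgc
      induction i using Fin.cases with
      | zero =>
        simp only [Fin.cons_zero]; exact continuousAt_const
      | succ j =>
        simp only [Fin.cons_succ]; exact hncont _
  · intro x hx hle
    have hg0 : g (x L) = 0 := by
      rw [hg]
      simp only
      rw [max_eq_left]
      have : min 1 (x L - 1) ≤ x L - 1 := min_le_right _ _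
      linarith
    funext i
    simp only [hg0]; ring
  · intro x hx hge
    have hg1 : g (x L) = 1 := by
      rw [hg]
      simp only
      rw [min_eq_left (by linarith), max_eq_right (by norm_num)]
    funext i
    simp only [hg1]; ring
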